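/- arXiv:1507.07846 — 3 statements merged into one kernel-verified Lean document; each statement's English description precedes it below -/
import Mathlib

section
/- For every τ with 0 ≤ τ < 1/2, the integral ∫_{ℝ³} (1+|ξ|²)^τ (1+ξ₁²)^{-1} (1+ξ₂²)^{-1} (1+ξ₃²)^{-1} dξ is finite. -/
open MeasureTheory

private lemma one_dim_integrable {τ : ℝ} (hτ0 : 0 ≤ τ) (hτ : τ < 1 / 2) :
    Integrable (fun x : ℝ => (1 + x ^ 2) ^ (τ - 1)) := by
  have hfr : ((Module.finrank ℝ ℝ : ℝ)) < 2 * (1 - τ) := by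
    simp [Module.finrank_self]; linarith
  have h := integrable_rpow_neg_one_add_norm_sq (E := ℝ) (μ := volume) hfr
  have heq : (fun x : ℝ => (1 + x ^ 2) ^ (τ - 1))
      = fun x : ℝ => ((1 : ℝ) + ‖x‖ ^ 2) ^ (-(2 * (1 - τ)) / 2) := by
    funext x
    rw [Real.norm_eq_abs, sq_abs]
    congr 1
    ring
  rw [heq]
  exact h

/-- The key integrability computation in the proof of Lemma 3.3:
`∫_{ℝ³} (1+|ξ|²)^τ (1+ξ₁²)⁻¹ (1+ξ₂²)⁻¹ (1+ξ₃²)⁻¹ dξ < ∞` for `0 ≤ τ < 1/2`. -/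
theorem weighted_integral_finite
    (τ : ℝ) (hτ0 : 0 ≤ τ) (hτ : τ < 1 / 2) :
    ∫⁻ ξ : EuclideanSpace ℝ (Fin 3),
      ENNReal.ofReal ((1 + ‖ξ‖ ^ 2) ^ τ *
        (1 + ξ 0 ^ 2)⁻¹ * (1 + ξ 1 ^ 2)⁻¹ * (1 + ξ 2 ^ 2)⁻¹) < ⊤ := by
  -- the bounding product function on `Fin 3 → ℝ`
  set g : (Fin 3 → ℝ) → ℝ := fun x => ∏ i, (1 + x i ^ 2) ^ (τ - 1) with hg_def
  have hg : Integrable g := by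
    exact Integrable.fin_nat_prod (𝕜 := ℝ) (fun i => one_dim_integrable hτ0 hτ)
  have hg0 : ∀ x, 0 ≤ g x := fun x =>
    Finset.prod_nonneg fun i _ => Real.rpow_nonneg (by positivity) _
  have hgfin : ∫⁻ x : Fin 3 → ℝ, ENNReal.ofReal (g x) < ⊤ := by
    have := hg.hasFiniteIntegral
    rwa [HasFiniteIntegral, lintegral_enorm_of_nonneg hg0] at this
  -- transfer to EuclideanSpace via the measure-preserving equivalence
  have hmp := EuclideanSpace.volume_preserving_symm_measurableEquiv_toLp (Fin 3)
  have htrans : ∫⁻ ξ : EuclideanSpace ℝ (Fin 3),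
      ENNReal.ofReal (g ((MeasurableEquiv.toLp 2 (Fin 3 → ℝ)).symm ξ))
      = ∫⁻ x : Fin 3 → ℝ, ENNReal.ofReal (g x) :=
    hmp.lintegral_comp_emb (MeasurableEquiv.measurableEmbedding _) (fun x => ENNReal.ofReal (g x))
  refine lt_of_le_of_lt ?_ (htrans ▸ hgfin)
  refine lintegral_mono fun ξ => ENNReal.ofReal_le_ofReal ?_
  -- pointwise bound
  have hcoord : ∀ i, ((MeasurableEquiv.toLp 2 (Fin 3 → ℝ)).symm ξ) i = ξ i := fun i => rfl
  have hnorm : ‖ξ‖ ^ 2 = ξ 0 ^ 2 + ξ 1 ^ 2 + ξ 2 ^ 2 := by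
    rw [EuclideanSpace.norm_eq, Real.sq_sqrt (by positivity)]
    simp [Fin.sum_univ_three, sq_abs]
  set a := 1 + ξ 0 ^ 2 with ha_def
  set b := 1 + ξ 1 ^ 2 with hb_def
  set c := 1 + ξ 2 ^ 2 with hc_def
  have ha : (0:ℝ) < a := by positivity
  have hb : (0:ℝ) < b := by positivity
  have hc : (0:ℝ) < c := by positivity
  have hkey : 1 + ‖ξ‖ ^ 2 ≤ a * b * c := by
    rw [hnorm, ha_def, hb_def, hc_def]
    nlinarith [sq_nonneg (ξ 0), sq_nonneg (ξ 1), sq_nonneg (ξ 2),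
      sq_nonneg (ξ 0 * ξ 1), sq_nonneg (ξ 1 * ξ 2), sq_nonneg (ξ 0 * ξ 2),
      sq_nonneg (ξ 0 * ξ 1 * ξ 2)]
  have h2 : (1 + ‖ξ‖ ^ 2) ^ τ ≤ a ^ τ * b ^ τ * c ^ τ := by
    calc (1 + ‖ξ‖ ^ 2) ^ τ ≤ (a * b * c) ^ τ :=
          Real.rpow_le_rpow (by positivity) hkey hτ0
      _ = a ^ τ * b ^ τ * c ^ τ := by
          rw [Real.mul_rpow (by positivity) (by positivity),
            Real.mul_rpow (by positivity) (by positivity)]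
  have hrhs : g ((MeasurableEquiv.toLp 2 (Fin 3 → ℝ)).symm ξ)
      = a ^ τ * b ^ τ * c ^ τ * a⁻¹ * b⁻¹ * c⁻¹ := by
    simp only [hg_def, Fin.prod_univ_three, hcoord, ← ha_def, ← hb_def, ← hc_def]
    rw [Real.rpow_sub ha, Real.rpow_sub hb, Real.rpow_sub hc, Real.rpow_one,
      Real.rpow_one, Real.rpow_one]
    field_simp
  rw [hrhs]
  have hinv : (0:ℝ) ≤ a⁻¹ * b⁻¹ * c⁻¹ := by positivity
  calc (1 + ‖ξ‖ ^ 2) ^ τ * a⁻¹ * b⁻¹ * c⁻¹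
      = (1 + ‖ξ‖ ^ 2) ^ τ * (a⁻¹ * b⁻¹ * c⁻¹) := by ring
    _ ≤ (a ^ τ * b ^ τ * c ^ τ) * (a⁻¹ * b⁻¹ * c⁻¹) :=
        mul_le_mul_of_nonneg_right h2 hinv
    _ = a ^ τ * b ^ τ * c ^ τ * a⁻¹ * b⁻¹ * c⁻¹ := by ring
end

section
/- Let N ≥ 1, let W ⊆ ℝᴺ be measurable, let H : ℝᴺ → ℂ be a homogeneous polynomial of degree n, and let R > 0, δ > 0. Then there exists a constant C (depending only on H, δ, R and N) such that for every τ ≥ 1 and every ρ ∈ ℂᴺ with Re(ρ)·x ≥ τδ|x| for all x ∈ W, the function x ↦ e^{-ρ·x} H(x) is Lebesgue-integrable on W and |∫_{W ∩ {|x| ≥ R}} e^{-ρ·x} H(x) dx| ≤ C e^{-τδR/2}. -/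
open MeasureTheory Set

private lemma int1d (a : ℝ) (ha : 0 < a) : Integrable (fun x : ℝ => Real.exp (-(a * |x|))) := by
  have h1 : IntegrableOn (fun x : ℝ => Real.exp (-(a * |x|))) (Ioi 0) := by
    apply (exp_neg_integrableOn_Ioi 0 ha).congr_fun ?_ measurableSet_Ioi
    intro x hx; simp [abs_of_pos (mem_Ioi.mp hx)]
  have h2 : IntegrableOn (fun x : ℝ => Real.exp (-(a * |x|))) (Iio 0) := by
    have hmp : MeasurePreserving (Neg.neg : ℝ → ℝ) volume volume :=
      Measure.measurePreserving_neg _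
    have := (hmp.integrableOn_comp_preimage
      (MeasurableEquiv.neg ℝ).measurableEmbedding
      (f := fun x : ℝ => Real.exp (-(a * |x|))) (s := Ioi 0)).mpr h1
    simpa [Function.comp_def, abs_neg] using this
  have h3 : IntegrableOn (fun x : ℝ => Real.exp (-(a * |x|))) (Iio 0 ∪ Ioi 0) := h2.union h1
  have h4 : (Iio (0:ℝ) ∪ Ioi 0) = {(0:ℝ)}ᶜ := by
    ext t; simp [lt_or_lt_iff_ne]
  rw [← integrableOn_univ]
  apply h3.congr_set_ae
  rw [h4]
  symm
  exact ae_eq_univ.mpr (by simp)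

private lemma pow_le_exp' (n : ℕ) (t : ℝ) (ht : 0 ≤ t) :
    t ^ n ≤ n.factorial * Real.exp t := by
  have h := Real.sum_le_exp_of_nonneg ht (n + 1)
  have h2 : t ^ n / n.factorial ≤ ∑ i ∈ Finset.range (n + 1), t ^ i / i.factorial :=
    Finset.single_le_sum (f := fun i => t ^ i / i.factorial) (fun i _ => by positivity)
      (Finset.self_mem_range_succ n)
  have h3 := h2.trans h
  rw [div_le_iff₀ (by positivity)] at h3
  nlinarith [Real.exp_pos t, n.factorial_pos]

private lemma pow_mul_exp_le' (n : ℕ) {c : ℝ} (hc : 0 < c) {t : ℝ} (ht : 0 ≤ t) :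
    t ^ n * Real.exp (-(c * t)) ≤
      (n.factorial * (2 / c) ^ n) * Real.exp (-(c / 2 * t)) := by
  have h : (c / 2 * t) ^ n ≤ n.factorial * Real.exp (c / 2 * t) :=
    pow_le_exp' n _ (by positivity)
  have h2 : t ^ n ≤ n.factorial * (2 / c) ^ n * Real.exp (c / 2 * t) := by
    rw [mul_pow] at h
    have h3 : (2 / c) ^ n * ((c / 2) ^ n * t ^ n) ≤
        (2 / c) ^ n * (n.factorial * Real.exp (c / 2 * t)) := by
      gcongr
    calc t ^ n = (2 / c) ^ n * ((c / 2) ^ n * t ^ n) := by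
          rw [← mul_assoc, ← mul_pow]; field_simp; simp
      _ ≤ _ := h3
      _ = n.factorial * (2 / c) ^ n * Real.exp (c / 2 * t) := by ring
  calc t ^ n * Real.exp (-(c * t))
      ≤ (n.factorial * (2 / c) ^ n * Real.exp (c / 2 * t)) * Real.exp (-(c * t)) := by
        gcongr
    _ = (n.factorial * (2 / c) ^ n) * Real.exp (c / 2 * t + -(c * t)) := by
        rw [Real.exp_add]; ring
    _ = (n.factorial * (2 / c) ^ n) * Real.exp (-(c / 2 * t)) := by ring_nf

private lemma coord_le' (N : ℕ) (x : EuclideanSpace ℝ (Fin N)) (j : Fin N) : |x j| ≤ ‖x‖ := by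
  rw [EuclideanSpace.norm_eq]
  calc |x j| = Real.sqrt (‖x j‖ ^ 2) := by rw [Real.sqrt_sq_eq_abs]; simp [Real.norm_eq_abs]
    _ ≤ _ := Real.sqrt_le_sqrt
        (Finset.single_le_sum (fun i _ => sq_nonneg ‖x i‖) (Finset.mem_univ j))

private lemma eval_bound' (N n : ℕ) (H : MvPolynomial (Fin N) ℂ) (hH : H.IsHomogeneous n)
    (x : EuclideanSpace ℝ (Fin N)) :
    ‖MvPolynomial.eval (fun j => ((x j : ℝ) : ℂ)) H‖ ≤
      (∑ d ∈ H.support, ‖H.coeff d‖) * ‖x‖ ^ n := by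
  rw [MvPolynomial.eval_eq, Finset.sum_mul]
  refine (norm_sum_le _ _).trans (Finset.sum_le_sum fun d hd => ?_)
  rw [norm_mul]
  gcongr
  calc ‖∏ i ∈ d.support, ((x i : ℝ) : ℂ) ^ d i‖ = ∏ i ∈ d.support, |x i| ^ d i := by
        rw [norm_prod]
        exact Finset.prod_congr rfl fun i _ => by
          rw [norm_pow, Complex.norm_real, Real.norm_eq_abs]
    _ ≤ ∏ i ∈ d.support, ‖x‖ ^ d i :=
        Finset.prod_le_prod (fun i _ => by positivity)
          (fun i _ => pow_le_pow_left₀ (abs_nonneg _) (coord_le' N x i) _)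
    _ = ‖x‖ ^ (∑ i ∈ d.support, d i) := by rw [← Finset.prod_pow_eq_pow_sum]
    _ = ‖x‖ ^ n := by
        congr 1
        have := hH (MvPolynomial.mem_support_iff.mp hd)
        rw [← this]
        simp [Finsupp.weight, Finsupp.linearCombination, Finsupp.sum]

private lemma prod_exp_integrable' (N : ℕ) (b : ℝ) (hb : 0 < b) :
    Integrable (fun x : EuclideanSpace ℝ (Fin N) => ∏ j, Real.exp (-(b * |x j|))) := by
  have hpi : Integrable (fun v : Fin N → ℝ => ∏ j, Real.exp (-(b * |v j|))) :=
    Integrable.fintype_prod (f := fun _ (t : ℝ) => Real.exp (-(b * |t|)))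
      (fun _ => int1d b hb)
  exact ((EuclideanSpace.volume_preserving_symm_measurableEquiv_toLp (Fin N)).integrable_comp
    hpi.1).mpr hpi

private lemma exp_norm_le_prod (N : ℕ) (hN : 1 ≤ N) {c : ℝ} (hc : 0 < c)
    (x : EuclideanSpace ℝ (Fin N)) :
    Real.exp (-(c * ‖x‖)) ≤ ∏ j, Real.exp (-(c / N * |x j|)) := by
  rw [← Real.exp_sum]
  apply Real.exp_le_exp.mpr
  have hsum : ∑ j, |x j| ≤ N * ‖x‖ := by
    calc ∑ j, |x j| ≤ ∑ _j : Fin N, ‖x‖ := Finset.sum_le_sum fun j _ => coord_le' N x j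
      _ = N * ‖x‖ := by simp [mul_comm]
  have hN0 : (0:ℝ) < N := by exact_mod_cast hN
  have h0 : ∑ j, -(c / N * |x j|) = -(c / N * ∑ j, |x j|) := by
    simp [Finset.mul_sum]
  rw [h0]
  have h1 : c / N * ∑ j, |x j| ≤ c / N * (N * ‖x‖) := by
    gcongr
  calc -(c * ‖x‖) = -(c / N * (N * ‖x‖)) := by field_simp
    _ ≤ -(c / N * ∑ j, |x j|) := by linarith

/-- The exponential tail estimate (formula (eq:6)): for a homogeneous polynomial `H`
of degree `n` and `ρ ∈ ℂᴺ` with `Re(ρ)·x ≥ τδ|x|` on `W`, the Laplace-type integrand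
is integrable on `W` and its integral over `W ∩ {|x| ≥ R}` is `O(e^{-τδR/2})`,
uniformly in `τ ≥ 1`. -/
theorem laplace_transform_tail_estimate
    (N : ℕ) (hN : 1 ≤ N)
    (W : Set (EuclideanSpace ℝ (Fin N))) (hWmeas : MeasurableSet W)
    (n : ℕ) (H : MvPolynomial (Fin N) ℂ) (hH : H.IsHomogeneous n)
    (R δ : ℝ) (hR : 0 < R) (hδ : 0 < δ) :
    ∃ C : ℝ, ∀ τ : ℝ, 1 ≤ τ → ∀ ρ : Fin N → ℂ,
      (∀ x ∈ W, τ * δ * ‖x‖ ≤ ∑ j, (ρ j).re * x j) →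
      IntegrableOn
        (fun x : EuclideanSpace ℝ (Fin N) =>
          Complex.exp (-(∑ j, ρ j * (x j : ℂ))) *
            MvPolynomial.eval (fun j => ((x j : ℝ) : ℂ)) H) W volume ∧
      ‖∫ x in W ∩ {x : EuclideanSpace ℝ (Fin N) | R ≤ ‖x‖},
          Complex.exp (-(∑ j, ρ j * (x j : ℂ))) *
            MvPolynomial.eval (fun j => ((x j : ℝ) : ℂ)) H‖ ≤
        C * Real.exp (-(τ * δ * R / 2)) := by
  classical
  set M : ℝ := ∑ d ∈ H.support, ‖H.coeff d‖ with hM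
  have hMnn : 0 ≤ M := Finset.sum_nonneg fun _ _ => norm_nonneg _
  have hK4nn : (0:ℝ) ≤ n.factorial * (2 / (δ / 2)) ^ n := by positivity
  set G : EuclideanSpace ℝ (Fin N) → ℝ :=
    fun x => M * ((n.factorial * (2 / (δ / 2)) ^ n) *
      ∏ j, Real.exp (-(δ / 4 / N * |x j|))) with hG
  have hGint : Integrable G :=
    ((prod_exp_integrable' N (δ / 4 / N)
      (div_pos (by positivity) (by exact_mod_cast hN))).const_mul
        (M * (n.factorial * (2 / (δ / 2)) ^ n))).congr
          (ae_of_all _ fun x => mul_assoc _ _ _)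
  have hGnn : ∀ x, 0 ≤ G x := fun x => by
    apply mul_nonneg hMnn
    apply mul_nonneg hK4nn
    exact Finset.prod_nonneg fun j _ => (Real.exp_pos _).le
  refine ⟨∫ x, G x, ?_⟩
  intro τ hτ ρ hρ
  set f : EuclideanSpace ℝ (Fin N) → ℂ :=
    fun x => Complex.exp (-(∑ j, ρ j * (x j : ℂ))) *
      MvPolynomial.eval (fun j => ((x j : ℝ) : ℂ)) H with hf
  -- norm of f
  have hfnorm : ∀ x : EuclideanSpace ℝ (Fin N),
      ‖f x‖ = Real.exp (-(∑ j, (ρ j).re * x j)) *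
        ‖MvPolynomial.eval (fun j => ((x j : ℝ) : ℂ)) H‖ := by
    intro x
    rw [hf, norm_mul]
    congr 1
    rw [Complex.norm_exp]
    congr 1
    simp [Complex.mul_re]
  -- continuity of f
  have hfc : Continuous f := by
    apply Continuous.mul
    · apply Complex.continuous_exp.comp
      apply Continuous.neg
      exact continuous_finset_sum _ fun j _ =>
        continuous_const.mul (Complex.continuous_ofReal.comp (EuclideanSpace.proj j).continuous)
    · simp_rw [MvPolynomial.eval_eq]
      refine continuous_finset_sum _ fun d _ => Continuous.mul continuous_const ?_
      refine continuous_finset_prod _ fun i _ => Continuous.pow ?_ _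
      exact Complex.continuous_ofReal.comp (EuclideanSpace.proj i).continuous
  -- main pointwise bound on W
  have hbound : ∀ x ∈ W, ‖f x‖ ≤ M * (‖x‖ ^ n * Real.exp (-(τ * δ * ‖x‖))) := by
    intro x hx
    rw [hfnorm]
    calc Real.exp (-(∑ j, (ρ j).re * x j)) *
          ‖MvPolynomial.eval (fun j => ((x j : ℝ) : ℂ)) H‖
        ≤ Real.exp (-(τ * δ * ‖x‖)) * (M * ‖x‖ ^ n) := by
          apply mul_le_mul (Real.exp_le_exp.mpr (by linarith [hρ x hx]))
            (eval_bound' N n H hH x) (norm_nonneg _) (Real.exp_pos _).le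
      _ = M * (‖x‖ ^ n * Real.exp (-(τ * δ * ‖x‖))) := by ring
  have hτδ : δ ≤ τ * δ := by nlinarith
  constructor
  · -- integrability on W
    have hK2nn : (0:ℝ) ≤ n.factorial * (2 / δ) ^ n := by positivity
    have hg2int : Integrable (fun x : EuclideanSpace ℝ (Fin N) =>
        M * ((n.factorial * (2 / δ) ^ n) * ∏ j, Real.exp (-(δ / 2 / N * |x j|)))) :=
      ((prod_exp_integrable' N (δ / 2 / N)
        (div_pos (by positivity) (by exact_mod_cast hN))).const_mul
          (M * (n.factorial * (2 / δ) ^ n))).congr (ae_of_all _ fun x => mul_assoc _ _ _)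
    apply Integrable.mono' hg2int.integrableOn hfc.aestronglyMeasurable.restrict
    apply (ae_restrict_iff' hWmeas).mpr
    apply Filter.Eventually.of_forall
    intro x hx
    calc ‖f x‖ ≤ M * (‖x‖ ^ n * Real.exp (-(τ * δ * ‖x‖))) := hbound x hx
      _ ≤ M * (‖x‖ ^ n * Real.exp (-(δ * ‖x‖))) := by
          refine mul_le_mul_of_nonneg_left (mul_le_mul_of_nonneg_left ?_
            (pow_nonneg (norm_nonneg x) n)) hMnn
          apply Real.exp_le_exp.mpr
          have : δ * ‖x‖ ≤ τ * δ * ‖x‖ := mul_le_mul_of_nonneg_right hτδ (norm_nonneg _)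
          linarith
      _ ≤ M * ((n.factorial * (2 / δ) ^ n) * Real.exp (-(δ / 2 * ‖x‖))) :=
          mul_le_mul_of_nonneg_left (pow_mul_exp_le' n hδ (norm_nonneg x)) hMnn
      _ ≤ M * ((n.factorial * (2 / δ) ^ n) * ∏ j, Real.exp (-(δ / 2 / N * |x j|))) :=
          mul_le_mul_of_nonneg_left (mul_le_mul_of_nonneg_left
            (exp_norm_le_prod N hN (by positivity) x) hK2nn) hMnn
  · -- tail estimate
    set S : Set (EuclideanSpace ℝ (Fin N)) := W ∩ {x | R ≤ ‖x‖} with hS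
    have hSmeas : MeasurableSet S :=
      hWmeas.inter (isClosed_le continuous_const continuous_norm).measurableSet
    have hGS : Integrable (fun x => Real.exp (-(τ * δ * R / 2)) * G x)
        (volume.restrict S) := (hGint.const_mul _).integrableOn
    have hptS : ∀ x ∈ S, ‖f x‖ ≤ Real.exp (-(τ * δ * R / 2)) * G x := by
      intro x hxS
      obtain ⟨hxW, hxR⟩ := hxS
      have hxR' : R ≤ ‖x‖ := hxR
      have hτδpos : 0 < τ * δ := by nlinarith
      calc ‖f x‖ ≤ M * (‖x‖ ^ n * Real.exp (-(τ * δ * ‖x‖))) := hbound x hxW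
        _ = M * (‖x‖ ^ n * Real.exp (-(τ * δ / 2 * ‖x‖))) *
              Real.exp (-(τ * δ / 2 * ‖x‖)) := by
            have he : Real.exp (-(τ * δ * ‖x‖)) =
                Real.exp (-(τ * δ / 2 * ‖x‖)) * Real.exp (-(τ * δ / 2 * ‖x‖)) := by
              rw [← Real.exp_add]; ring_nf
            rw [he]; ring
        _ ≤ M * (‖x‖ ^ n * Real.exp (-(δ / 2 * ‖x‖))) *
              Real.exp (-(τ * δ * R / 2)) := by
            apply mul_le_mul ?_ ?_ (Real.exp_pos _).le (by positivity)
            · refine mul_le_mul_of_nonneg_left (mul_le_mul_of_nonneg_left ?_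
                (pow_nonneg (norm_nonneg x) n)) hMnn
              apply Real.exp_le_exp.mpr
              nlinarith [norm_nonneg x]
            · apply Real.exp_le_exp.mpr
              nlinarith
        _ ≤ M * ((n.factorial * (2 / (δ / 2)) ^ n) * Real.exp (-(δ / 4 * ‖x‖))) *
              Real.exp (-(τ * δ * R / 2)) := by
            apply mul_le_mul_of_nonneg_right ?_ (Real.exp_pos _).le
            apply mul_le_mul_of_nonneg_left ?_ hMnn
            have hhalf : δ / 2 / 2 = δ / 4 := by ring
            have h5 := pow_mul_exp_le' n (show (0:ℝ) < δ / 2 by positivity)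
              (norm_nonneg x)
            rw [hhalf] at h5
            exact h5
        _ ≤ M * ((n.factorial * (2 / (δ / 2)) ^ n) * ∏ j, Real.exp (-(δ / 4 / N * |x j|))) *
              Real.exp (-(τ * δ * R / 2)) := by
            apply mul_le_mul_of_nonneg_right ?_ (Real.exp_pos _).le
            exact mul_le_mul_of_nonneg_left (mul_le_mul_of_nonneg_left
              (exp_norm_le_prod N hN (by positivity) x) hK4nn) hMnn
        _ = Real.exp (-(τ * δ * R / 2)) * G x := by rw [hG]; ring
    calc ‖∫ x in S, f x‖ ≤ ∫ x in S, Real.exp (-(τ * δ * R / 2)) * G x :=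
          norm_integral_le_of_norm_le hGS
            ((ae_restrict_iff' hSmeas).mpr (Filter.Eventually.of_forall hptS))
      _ = Real.exp (-(τ * δ * R / 2)) * ∫ x in S, G x := by
          rw [integral_const_mul]
      _ ≤ Real.exp (-(τ * δ * R / 2)) * ∫ x, G x := by
          exact mul_le_mul_of_nonneg_left (setIntegral_le_integral hGint
            (Filter.Eventually.of_forall hGnn)) (Real.exp_pos _).le
      _ = (∫ x, G x) * Real.exp (-(τ * δ * R / 2)) := by ring
end

section
/- Let N ≥ 2, let W ⊆ ℝᴺ be a measurable cone (tx ∈ W whenever x ∈ W and t > 0), let H : ℝᴺ → ℂ be a homogeneous polynomial of degree n, let k ≥ 0, and let ω, ω⊥ ∈ ℝᴺ be orthonormal unit vectors such that ω·x ≥ δ|x| for all x ∈ W, for some δ > 0. For τ > 0 set ρ_τ = τω + i(τ²+k²)^{1/2}ω⊥ ∈ ℂᴺ, and let F(z) = ∫_W e^{-z·x}H(x)dx (the integral converges whenever Re(z)·x ≥ c|x| on W for some c>0). If there exist C ≥ 0, ε > 0 and τ₀ > 0 such that |F(ρ_τ)| ≤ C τ^{-(n+N)-ε} for all τ ≥ τ₀,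 then F(ω + iω⊥) = 0. -/
open MeasureTheory Set
open scoped InnerProductSpace

lemma homog_eval_smul {N n : ℕ} (H : MvPolynomial (Fin N) ℂ) (hH : H.IsHomogeneous n)
    (c : ℂ) (v : Fin N → ℂ) :
    MvPolynomial.eval (fun j => c * v j) H = c ^ n * MvPolynomial.eval v H := by
  rw [MvPolynomial.eval_eq', MvPolynomial.eval_eq', Finset.mul_sum]
  refine Finset.sum_congr rfl fun d hd => ?_
  have hdeg : ∑ i, d i = n := by
    have := hH (MvPolynomial.mem_support_iff.mp hd)
    rw [← this, Finsupp.weight_apply]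
    rw [Finsupp.sum_fintype]
    · simp
    · simp
  simp only [mul_pow, Finset.prod_mul_distrib, Finset.prod_pow_eq_pow_sum, hdeg]
  ring

/-- End of Step 2 of the proof of Lemma 2.2: if the Laplace transform `F` of a
homogeneous polynomial of degree `n` over a cone `W` decays like `τ^{-(n+N)-ε}`
along the CGO directions `ρ_τ = τω + i√(τ²+k²) ω⊥`, then by homogeneity
`F(ω + iω⊥) = 0`. -/
theorem laplace_transform_vanishing
    (N : ℕ) (hN : 2 ≤ N)
    (W : Set (EuclideanSpace ℝ (Fin N))) (hWmeas : MeasurableSet W)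
    (hWcone : ∀ x ∈ W, ∀ t : ℝ, 0 < t → t • x ∈ W)
    (n : ℕ) (H : MvPolynomial (Fin N) ℂ) (hH : H.IsHomogeneous n)
    (k : ℝ) (hk : 0 ≤ k)
    (ω ωperp : EuclideanSpace ℝ (Fin N))
    (hω : ‖ω‖ = 1) (hωperp : ‖ωperp‖ = 1) (horth : ⟪ω, ωperp⟫_ℝ = 0)
    (δ : ℝ) (hδ : 0 < δ)
    (hWω : ∀ x ∈ W, δ * ‖x‖ ≤ ∑ j, ω j * x j)
    (F : (Fin N → ℂ) → ℂ)
    (hF : ∀ z : Fin N → ℂ, F z =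
      ∫ x in W, Complex.exp (-(∑ j, z j * (x j : ℂ))) *
        MvPolynomial.eval (fun j => ((x j : ℝ) : ℂ)) H)
    (hconv : ∀ z : Fin N → ℂ,
      (∃ c > (0 : ℝ), ∀ x ∈ W, c * ‖x‖ ≤ ∑ j, (z j).re * x j) →
      IntegrableOn
        (fun x : EuclideanSpace ℝ (Fin N) =>
          Complex.exp (-(∑ j, z j * (x j : ℂ))) *
            MvPolynomial.eval (fun j => ((x j : ℝ) : ℂ)) H) W volume)
    (hdecay : ∃ C ≥ (0 : ℝ), ∃ ε > (0 : ℝ), ∃ τ₀ > (0 : ℝ), ∀ τ : ℝ, τ₀ ≤ τ →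
      ‖F (fun j => ((τ * ω j : ℝ) : ℂ) +
          Complex.I * ((Real.sqrt (τ ^ 2 + k ^ 2) * ωperp j : ℝ) : ℂ))‖ ≤
        C * τ ^ (-((n : ℝ) + N) - ε)) :
    F (fun j => ((ω j : ℝ) : ℂ) + Complex.I * ((ωperp j : ℝ) : ℂ)) = 0 := by
  classical
  -- the one-parameter family of frequencies
  set z : ℝ → Fin N → ℂ :=
    fun s j => ((ω j : ℝ) : ℂ) + Complex.I * ((s * ωperp j : ℝ) : ℂ) with hzdef
  have hgoal : (fun j => ((ω j : ℝ) : ℂ) + Complex.I * ((ωperp j : ℝ) : ℂ)) = z 1 := by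
    funext j; simp [hzdef]
  rw [hgoal]
  -- real parts
  have hre : ∀ (s : ℝ) (j : Fin N), (z s j).re = ω j := by
    intro s j; simp [hzdef]
  -- integrability for every s
  have hint : ∀ s : ℝ,
      IntegrableOn (fun x : EuclideanSpace ℝ (Fin N) =>
        Complex.exp (-(∑ j, z s j * (x j : ℂ))) *
          MvPolynomial.eval (fun j => ((x j : ℝ) : ℂ)) H) W volume := by
    intro s
    refine hconv (z s) ⟨δ, hδ, fun x hx => ?_⟩
    simpa [hre] using hWω x hx
  -- homogeneity of F
  have hhom : ∀ τ : ℝ, 0 < τ → ∀ u : Fin N → ℂ,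
      F u = (τ : ℂ) ^ (n + N) * F (fun j => (τ : ℂ) * u j) := by
    intro τ hτ u
    have hW2 : ∀ x : EuclideanSpace ℝ (Fin N), τ • x ∈ W ↔ x ∈ W := by
      intro x
      constructor
      · intro h
        have := hWcone _ h τ⁻¹ (by positivity)
        simpa [smul_smul, inv_mul_cancel₀ hτ.ne'] using this
      · intro h; exact hWcone _ h τ hτ
    set f : EuclideanSpace ℝ (Fin N) → ℂ := fun x =>
      Complex.exp (-(∑ j, u j * (x j : ℂ))) *
        MvPolynomial.eval (fun j => ((x j : ℝ) : ℂ)) H with hfdef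
    set g : EuclideanSpace ℝ (Fin N) → ℂ := fun x =>
      Complex.exp (-(∑ j, ((τ : ℂ) * u j) * (x j : ℂ))) *
        MvPolynomial.eval (fun j => ((x j : ℝ) : ℂ)) H with hgdef
    have key : ∀ x : EuclideanSpace ℝ (Fin N),
        W.indicator f (τ • x) = (τ : ℂ) ^ n • W.indicator g x := by
      intro x
      by_cases hx : x ∈ W
      · rw [Set.indicator_of_mem ((hW2 x).mpr hx), Set.indicator_of_mem hx]
        have hcoord : ∀ j, (((τ • x) j : ℝ) : ℂ) = (τ : ℂ) * ((x j : ℝ) : ℂ) := by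
          intro j
          have : (τ • x) j = τ * x j := rfl
          rw [this]; push_cast; ring
        simp only [hfdef, hgdef, hcoord]
        rw [homog_eval_smul H hH ((τ : ℂ)) (fun j => ((x j : ℝ) : ℂ))]
        have hsum : (∑ j, u j * ((τ : ℂ) * ((x j : ℝ) : ℂ)))
            = ∑ j, ((τ : ℂ) * u j) * ((x j : ℝ) : ℂ) := by
          refine Finset.sum_congr rfl fun j _ => by ring
        rw [hsum]
        simp only [smul_eq_mul]
        ring
      · rw [Set.indicator_of_notMem (fun h => hx ((hW2 x).mp h)),
          Set.indicator_of_notMem hx, smul_zero]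
    have h1 : (∫ x, W.indicator f (τ • x)) = (τ : ℂ) ^ n • ∫ x, W.indicator g x := by
      rw [← integral_smul]
      exact integral_congr_ae (Filter.Eventually.of_forall key)
    rw [MeasureTheory.Measure.integral_comp_smul volume (W.indicator f) τ] at h1
    have hfinrank : Module.finrank ℝ (EuclideanSpace ℝ (Fin N)) = N :=
      finrank_euclideanSpace_fin
    rw [hfinrank] at h1
    have habs : |(τ ^ N)⁻¹| = (τ ^ N)⁻¹ := abs_of_pos (by positivity)
    rw [habs] at h1
    have hFf : (∫ x, W.indicator f x) = F u := by
      rw [integral_indicator hWmeas, hF u]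
    have hFg : (∫ x, W.indicator g x) = F (fun j => (τ : ℂ) * u j) := by
      rw [integral_indicator hWmeas, hF (fun j => (τ : ℂ) * u j)]
    rw [hFf, hFg] at h1
    have hτN : ((τ : ℂ) ^ N) ≠ 0 := by
      exact pow_ne_zero _ (by exact_mod_cast hτ.ne')
    have h2 : ((τ : ℂ) ^ N)⁻¹ * F u = (τ : ℂ) ^ n * F (fun j => (τ : ℂ) * u j) := by
      have : ((τ ^ N)⁻¹ : ℝ) • F u = (((τ : ℂ)) ^ N)⁻¹ * F u := by
        rw [Complex.real_smul]; push_cast; ring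
      rw [← this, h1, smul_eq_mul]
    field_simp at h2
    rw [pow_add]
    linear_combination h2
  -- decay data
  obtain ⟨C, hC, ε, hε, τ₀, hτ₀, hbd⟩ := hdecay
  set s : ℝ → ℝ := fun τ => Real.sqrt (τ ^ 2 + k ^ 2) / τ with hsdef
  -- ρ_τ = τ • z (s τ)
  have hρ : ∀ τ : ℝ, 0 < τ →
      (fun j => ((τ * ω j : ℝ) : ℂ) +
        Complex.I * ((Real.sqrt (τ ^ 2 + k ^ 2) * ωperp j : ℝ) : ℂ))
      = fun j => (τ : ℂ) * z (s τ) j := by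
    intro τ hτ
    funext j
    have hts : τ * s τ = Real.sqrt (τ ^ 2 + k ^ 2) := by
      rw [hsdef]; field_simp
    simp only [hzdef]
    push_cast
    rw [← hts]
    push_cast
    ring
  -- the decay bound transported to F (z (s τ))
  have hbd2 : ∀ τ : ℝ, max τ₀ 1 ≤ τ → ‖F (z (s τ))‖ ≤ C * τ ^ (-ε) := by
    intro τ hτ
    have hτ1 : (1 : ℝ) ≤ τ := le_trans (le_max_right _ _) hτ
    have hτpos : 0 < τ := lt_of_lt_of_le one_pos hτ1
    have h1 := hhom τ hτpos (z (s τ))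
    rw [← hρ τ hτpos] at h1
    rw [h1]
    rw [norm_mul]
    have hnormpow : ‖(τ : ℂ) ^ (n + N)‖ = τ ^ (n + N) := by
      rw [norm_pow, Complex.norm_real, Real.norm_of_nonneg hτpos.le]
    rw [hnormpow]
    have hb := hbd τ (le_trans (le_max_left _ _) hτ)
    calc τ ^ (n + N) * ‖F fun j => ((τ * ω j : ℝ) : ℂ) +
          Complex.I * ((Real.sqrt (τ ^ 2 + k ^ 2) * ωperp j : ℝ) : ℂ)‖
        ≤ τ ^ (n + N) * (C * τ ^ (-((n : ℝ) + N) - ε)) := by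
          exact mul_le_mul_of_nonneg_left hb (by positivity)
      _ = C * τ ^ (-ε) := by
          rw [← Real.rpow_natCast τ (n + N), ← mul_assoc, mul_comm _ C, mul_assoc,
            ← Real.rpow_add hτpos]
          congr 1
          push_cast
          ring_nf
  -- s τ → 1
  have hslim : Filter.Tendsto s Filter.atTop (nhds 1) := by
    have h1 : ∀ᶠ τ in Filter.atTop, s τ = Real.sqrt (1 + (k / τ) ^ 2) := by
      filter_upwards [Filter.eventually_gt_atTop (0 : ℝ)] with τ hτ
      rw [hsdef]
      rw [show (1 : ℝ) + (k / τ) ^ 2 = (τ ^ 2 + k ^ 2) / τ ^ 2 by field_simp]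
      rw [Real.sqrt_div (by positivity), Real.sqrt_sq hτ.le]
    have hk0 : Filter.Tendsto (fun τ : ℝ => k / τ) Filter.atTop (nhds 0) :=
      Filter.Tendsto.div_atTop tendsto_const_nhds Filter.tendsto_id
    have h2 : Filter.Tendsto (fun τ : ℝ => 1 + (k / τ) ^ 2) Filter.atTop
        (nhds ((1 : ℝ) + 0 ^ 2)) :=
      Filter.Tendsto.add tendsto_const_nhds (hk0.pow 2)
    have h3 := (Real.continuous_sqrt.tendsto ((1 : ℝ) + 0 ^ 2)).comp h2
    have h4 : Filter.Tendsto (fun τ : ℝ => Real.sqrt (1 + (k / τ) ^ 2))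
        Filter.atTop (nhds 1) := by
      simpa [Function.comp_def] using h3
    refine Filter.Tendsto.congr' ?_ h4
    filter_upwards [h1] with τ h using h.symm
  -- limit along the family equals F (z 1) by dominated convergence
  have hmain : Filter.Tendsto (fun τ => F (z (s τ))) Filter.atTop (nhds (F (z 1))) := by
    have hFint : ∀ s' : ℝ, F (z s') =
        ∫ x in W, Complex.exp (-(∑ j, z s' j * (x j : ℂ))) *
          MvPolynomial.eval (fun j => ((x j : ℝ) : ℂ)) H := fun s' => hF (z s')
    simp only [hFint]
    refine MeasureTheory.tendsto_integral_filter_of_dominated_convergence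
      (fun x => ‖Complex.exp (-(∑ j, z 1 j * (x j : ℂ))) *
        MvPolynomial.eval (fun j => ((x j : ℝ) : ℂ)) H‖) ?_ ?_ ?_ ?_
    · exact Filter.Eventually.of_forall fun τ => (hint (s τ)).aestronglyMeasurable
    · refine Filter.Eventually.of_forall fun τ =>
        Filter.Eventually.of_forall (fun x => ?_)
      have hnorm : ∀ s' : ℝ, ‖Complex.exp (-(∑ j, z s' j * (x j : ℂ)))‖
          = Real.exp (-(∑ j, ω j * x j)) := by
        intro s'
        rw [Complex.norm_exp]
        congr 1
        simp [Complex.neg_re, Complex.re_sum, Complex.mul_re, hzdef]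
      simp only [norm_mul, hnorm]
      exact le_refl _
    · exact (hint 1).norm
    · refine Filter.Eventually.of_forall fun x => ?_
      have hc : Continuous fun s' : ℝ => Complex.exp (-(∑ j, z s' j * (x j : ℂ))) *
          MvPolynomial.eval (fun j => ((x j : ℝ) : ℂ)) H := by
        refine Continuous.mul ?_ continuous_const
        refine Complex.continuous_exp.comp ?_
        refine Continuous.neg ?_
        refine continuous_finset_sum _ fun j _ => ?_
        simp only [hzdef]
        fun_prop
      exact ((hc.tendsto 1)).comp hslim
  -- the same limit is 0 by the decay bound
  have hzero : Filter.Tendsto (fun τ => F (z (s τ))) Filter.atTop (nhds 0) := by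
    refine squeeze_zero_norm' (a := fun τ : ℝ => C * τ ^ (-ε)) ?_ ?_
    · filter_upwards [Filter.eventually_ge_atTop (max τ₀ 1)] with τ hτ using hbd2 τ hτ
    · have h1 : Filter.Tendsto (fun τ : ℝ => τ ^ (-ε)) Filter.atTop (nhds 0) :=
        tendsto_rpow_neg_atTop hε
      simpa using h1.const_mul C
  exact tendsto_nhds_unique hmain hzero
end
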